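/- For every real number x ≥ 5/2, one has Γ(1+2x) · Γ(1+x/2)² ≥ 2^x · Γ(1+x)² · Γ(1+(2x−1)/2)^{2x/(2x−1)}, where Γ denotes the Euler Gamma function. -/

import Mathlib

open Real Filter Finset Nat

lemma aux_log_ineq {m a b : ℝ} (ha : 0 < a) (hab : a ≤ b) (hbm : b < m) :
    b * (Real.log (m + a) - Real.log (m - a)) ≤ a * (Real.log (m + b) - Real.log (m - b)) := by
  have hb : 0 < b := ha.trans_le hab
  have hm : 0 < m := hb.trans hbm
  set h : ℝ → ℝ := fun t => Real.log (m + t) - Real.log (m - t) with hh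
  have hder : ∀ t ∈ Set.Icc (0:ℝ) b, HasDerivAt h ((m + t)⁻¹ + (m - t)⁻¹) t := by
    intro t ht
    have h1 : (0:ℝ) < m + t := by nlinarith [ht.1, ht.2]
    have h2 : (0:ℝ) < m - t := by nlinarith [ht.1, ht.2]
    have d1 : HasDerivAt (fun t : ℝ => Real.log (m + t)) (1 / (m + t)) t := by
      simpa using (((hasDerivAt_id t).const_add m).log h1.ne')
    have d2 : HasDerivAt (fun t : ℝ => Real.log (m - t)) (-1 / (m - t)) t := by
      simpa using (((hasDerivAt_id t).const_sub m).log h2.ne')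
    have := d1.sub d2
    refine this.congr_deriv ?_
    ring
  have hder2 : ∀ t ∈ Set.Ioo (0:ℝ) b,
      HasDerivAt (fun t => (m + t)⁻¹ + (m - t)⁻¹) (-((m+t)^2)⁻¹ + ((m-t)^2)⁻¹) t := by
    intro t ht
    have h1 : (0:ℝ) < m + t := by nlinarith [ht.1, ht.2]
    have h2 : (0:ℝ) < m - t := by nlinarith [ht.1, ht.2]
    have d1 : HasDerivAt (fun t : ℝ => (m + t)⁻¹) (-((m+t)^2)⁻¹) t := by
      have := (((hasDerivAt_id t).const_add m)).inv h1.ne'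
      refine this.congr_deriv ?_
      simp only [id]; ring
    have d2 : HasDerivAt (fun t : ℝ => (m - t)⁻¹) (((m-t)^2)⁻¹) t := by
      have := (((hasDerivAt_id t).const_sub m)).inv h2.ne'
      refine this.congr_deriv ?_
      simp only [id]; ring
    exact d1.add d2
  have hconv : ConvexOn ℝ (Set.Icc (0:ℝ) b) h := by
    refine convexOn_of_hasDerivWithinAt2_nonneg (convex_Icc 0 b)
      (fun t ht => (hder t ht).continuousAt.continuousWithinAt)
      (f' := fun t => (m + t)⁻¹ + (m - t)⁻¹)
      (f'' := fun t => -((m+t)^2)⁻¹ + ((m-t)^2)⁻¹) ?_ ?_ ?_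
    · intro t ht
      rw [interior_Icc] at ht
      exact (hder t (Set.mem_Icc_of_Ioo ht)).hasDerivWithinAt
    · intro t ht
      rw [interior_Icc] at ht
      exact (hder2 t ht).hasDerivWithinAt
    · intro t ht
      rw [interior_Icc] at ht
      have h1 : (0:ℝ) < m + t := by nlinarith [ht.1, ht.2]
      have h2 : (0:ℝ) < m - t := by nlinarith [ht.1, ht.2]
      have : ((m+t)^2)⁻¹ ≤ ((m-t)^2)⁻¹ := by
        apply inv_anti₀ (by positivity)
        nlinarith [ht.1, ht.2]
      linarith
  have hmem0 : (0:ℝ) ∈ Set.Icc (0:ℝ) b := Set.left_mem_Icc.2 hb.le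
  have hmemb : b ∈ Set.Icc (0:ℝ) b := Set.right_mem_Icc.2 hb.le
  have hw1 : (0:ℝ) ≤ 1 - a / b := by
    have : a / b ≤ 1 := (div_le_one hb).2 hab
    linarith
  have hw2 : (0:ℝ) ≤ a / b := by positivity
  have hsum : (1 - a / b) + a / b = 1 := by ring
  have := hconv.2 hmem0 hmemb hw1 hw2 hsum
  simp only [smul_eq_mul, mul_zero, zero_add] at this
  rw [div_mul_cancel₀ _ hb.ne'] at this
  have h0 : h 0 = 0 := by simp [hh]
  rw [h0, mul_zero, zero_add] at this
  -- this : h a ≤ a / b * h b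
  have := mul_le_mul_of_nonneg_left this hb.le
  calc b * (Real.log (m + a) - Real.log (m - a)) = b * h a := rfl
    _ ≤ b * (a / b * h b) := this
    _ = a * h b := by field_simp
    _ = a * (Real.log (m + b) - Real.log (m - b)) := rfl

lemma log_gammaSeq {s : ℝ} (hs : 0 < s) {n : ℕ} (hn : 0 < n) :
    Real.log (Real.GammaSeq s n) =
      s * Real.log n + Real.log (n ! : ℝ) - ∑ j ∈ Finset.range (n + 1), Real.log (s + j) := by
  have hn' : (0:ℝ) < n := by exact_mod_cast hn
  have hprod : ∀ j ∈ Finset.range (n + 1), s + (j : ℝ) ≠ 0 := by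
    intro j _
    positivity
  rw [Real.GammaSeq, Real.log_div (by positivity) (Finset.prod_ne_zero_iff.2 hprod),
    Real.log_mul (by positivity) (by positivity), Real.log_rpow hn',
    Real.log_prod hprod]

lemma gammaSeq_slope {c a b : ℝ} (ha : 0 < a) (hab : a ≤ b) (hbc : b < c) {n : ℕ} (hn : 0 < n) :
    a * (Real.log (Real.GammaSeq (c + b) n) - Real.log (Real.GammaSeq (c - b) n)) ≤
      b * (Real.log (Real.GammaSeq (c + a) n) - Real.log (Real.GammaSeq (c - a) n)) := by
  have hb : 0 < b := ha.trans_le hab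
  have hcb : (0:ℝ) < c - b := by linarith
  have hca : (0:ℝ) < c - a := by linarith
  have hpa : (0:ℝ) < c + a := by linarith
  have hpb : (0:ℝ) < c + b := by linarith
  have hsum : b * (∑ j ∈ Finset.range (n+1), (Real.log (c + a + j) - Real.log (c - a + j))) ≤
      a * (∑ j ∈ Finset.range (n+1), (Real.log (c + b + j) - Real.log (c - b + j))) := by
    rw [Finset.mul_sum, Finset.mul_sum]
    refine Finset.sum_le_sum fun j _ => ?_
    have := aux_log_ineq ha hab (show b < c + (j:ℝ) by
      have : (0:ℝ) ≤ (j:ℝ) := Nat.cast_nonneg j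
      linarith)
    calc b * (Real.log (c + a + j) - Real.log (c - a + j))
        = b * (Real.log (c + j + a) - Real.log (c + j - a)) := by ring_nf
      _ ≤ a * (Real.log (c + j + b) - Real.log (c + j - b)) := this
      _ = a * (Real.log (c + b + j) - Real.log (c - b + j)) := by ring_nf
  have hkey : a * (Real.log (Real.GammaSeq (c + b) n) - Real.log (Real.GammaSeq (c - b) n))
      - b * (Real.log (Real.GammaSeq (c + a) n) - Real.log (Real.GammaSeq (c - a) n))
      = b * (∑ j ∈ Finset.range (n+1), (Real.log (c + a + j) - Real.log (c - a + j)))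
        - a * (∑ j ∈ Finset.range (n+1), (Real.log (c + b + j) - Real.log (c - b + j))) := by
    rw [log_gammaSeq hpb hn, log_gammaSeq hcb hn, log_gammaSeq hpa hn, log_gammaSeq hca hn,
      Finset.sum_sub_distrib, Finset.sum_sub_distrib]
    ring
  linarith

lemma gamma_slope {c a b : ℝ} (ha : 0 < a) (hab : a ≤ b) (hbc : b < c) :
    a * (Real.log (Real.Gamma (c + b)) - Real.log (Real.Gamma (c - b))) ≤
      b * (Real.log (Real.Gamma (c + a)) - Real.log (Real.Gamma (c - a))) := by
  have hb : 0 < b := ha.trans_le hab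
  have ht : ∀ s : ℝ, 0 < s → Tendsto (fun n : ℕ => Real.log (Real.GammaSeq s n)) atTop
      (nhds (Real.log (Real.Gamma s))) := fun s hs =>
    (Real.GammaSeq_tendsto_Gamma s).log (Real.Gamma_pos_of_pos hs).ne'
  refine le_of_tendsto_of_tendsto
    ((((ht (c+b) (by linarith)).sub (ht (c-b) (by linarith))).const_mul a))
    ((((ht (c+a) (by linarith)).sub (ht (c-a) (by linarith))).const_mul b)) ?_
  filter_upwards [eventually_gt_atTop 0] with n hn
  exact gammaSeq_slope ha hab hbc hn

/-- For every real number `x ≥ 5/2`,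
`Γ(1+2x) · Γ(1+x/2)² ≥ 2ˣ · Γ(1+x)² · Γ(1+(2x−1)/2)^(2x/(2x−1))`. -/
theorem gamma_four_ineq (x : ℝ) (hx : 5 / 2 ≤ x) :
    Real.Gamma (1 + 2 * x) * Real.Gamma (1 + x / 2) ^ 2 ≥
      (2 : ℝ) ^ x * Real.Gamma (1 + x) ^ 2 *
        Real.Gamma (1 + (2 * x - 1) / 2) ^ (2 * x / (2 * x - 1)) := by
  have hx0 : (0:ℝ) < x := by linarith
  rw [show (1 + (2 * x - 1) / 2) = x + 1/2 by ring]
  -- positivity of all Gamma values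
  have p1 : 0 < Real.Gamma (x + 1/2) := Real.Gamma_pos_of_pos (by linarith)
  have p2 : 0 < Real.Gamma (1 + x/2) := Real.Gamma_pos_of_pos (by linarith)
  have p3 : 0 < Real.Gamma (x/2 + 1/2) := Real.Gamma_pos_of_pos (by linarith)
  have p4 : 0 < Real.Gamma (1 + x) := Real.Gamma_pos_of_pos (by linarith)
  have p5 : 0 < Real.Gamma (1 + 2*x) := Real.Gamma_pos_of_pos (by linarith)
  have p6 : 0 < Real.Gamma x := Real.Gamma_pos_of_pos hx0
  have p7 : 0 < Real.Gamma (x/2) := Real.Gamma_pos_of_pos (by linarith)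
  have p8 : 0 < Real.Gamma (2*x) := Real.Gamma_pos_of_pos (by linarith)
  -- the key slope inequality
  have h4 := gamma_slope (c := x/2 + 3/4) (a := 1/4) (b := x/2 - 1/4)
    (by norm_num) (by linarith) (by linarith)
  rw [show x/2 + 3/4 + (x/2 - 1/4) = x + 1/2 by ring,
    show x/2 + 3/4 - (x/2 - 1/4) = (1:ℝ) by ring,
    show x/2 + 3/4 + 1/4 = 1 + x/2 by ring,
    show x/2 + 3/4 - 1/4 = x/2 + 1/2 by ring,
    Real.Gamma_one, Real.log_one] at h4
  -- h4 : 1/4 * (log Γ(x+1/2) - 0) ≤ (x/2 - 1/4) * (log Γ(1+x/2) - log Γ(x/2+1/2))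
  have h2x1 : (0:ℝ) < 2*x - 1 := by linarith
  -- reduced inequality
  have hred : Real.Gamma (x + 1/2) ^ (1/(2*x-1)) ≤
      Real.Gamma (1 + x/2) / Real.Gamma (x/2 + 1/2) := by
    rw [Real.rpow_def_of_pos p1,
      show Real.Gamma (1 + x/2) / Real.Gamma (x/2 + 1/2)
        = Real.exp (Real.log (Real.Gamma (1 + x/2)) - Real.log (Real.Gamma (x/2 + 1/2))) by
          rw [Real.exp_sub, Real.exp_log p2, Real.exp_log p3]]
    apply Real.exp_le_exp.2
    rw [mul_one_div, div_le_iff₀ h2x1]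
    nlinarith [h4]
  -- rpow splitting
  have hsplit : Real.Gamma (x + 1/2) ^ (2*x/(2*x-1)) =
      Real.Gamma (x + 1/2) * Real.Gamma (x + 1/2) ^ (1/(2*x-1)) := by
    rw [show 2*x/(2*x-1) = 1 + 1/(2*x-1) by field_simp; ring, Real.rpow_add p1, Real.rpow_one]
  -- duplication identities
  have hdup1 : Real.Gamma x * Real.Gamma (x + 1/2)
      = Real.Gamma (2*x) * (2:ℝ) ^ (1 - 2*x) * Real.sqrt π := Real.Gamma_mul_Gamma_add_half x
  have hdup2 : Real.Gamma (x/2) * Real.Gamma (x/2 + 1/2)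
      = Real.Gamma x * (2:ℝ) ^ (1 - x) * Real.sqrt π := by
    have h := Real.Gamma_mul_Gamma_add_half (x/2)
    rw [show 2*(x/2) = x by ring] at h
    exact h
  have hA : Real.Gamma (1 + 2*x) = 2*x * Real.Gamma (2*x) := by
    rw [add_comm]; exact Real.Gamma_add_one (by positivity)
  have hB : Real.Gamma (1 + x/2) = x/2 * Real.Gamma (x/2) := by
    rw [add_comm]; exact Real.Gamma_add_one (by positivity)
  have hC : Real.Gamma (1 + x) = x * Real.Gamma x := by
    rw [add_comm]; exact Real.Gamma_add_one hx0.ne'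
  have e2 : (2:ℝ) ^ x * (2:ℝ) ^ (1 - 2*x) = (2:ℝ) ^ (1 - x) := by
    rw [← Real.rpow_add two_pos]; ring_nf
  have hsq : (0:ℝ) < Real.sqrt π := Real.sqrt_pos.2 Real.pi_pos
  -- key identity
  have hId : Real.Gamma (1 + 2*x) * Real.Gamma (1 + x/2)^2 * Real.Gamma (x/2 + 1/2)
      = (2:ℝ)^x * Real.Gamma (1 + x)^2 * Real.Gamma (x + 1/2) * Real.Gamma (1 + x/2) := by
    rw [hA, hC]
    nth_rewrite 1 [hB]
    nth_rewrite 1 [hB]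
    linear_combination (x^3/2) * Real.Gamma (2*x) * Real.Gamma (x/2) * hdup2
      - (x^3/2) * (2:ℝ)^x * Real.Gamma x * Real.Gamma (x/2) * hdup1
      - (x^3/2) * Real.Gamma (2*x) * Real.Gamma (x/2) * Real.Gamma x * Real.sqrt π * e2
  -- assemble
  rw [ge_iff_le, hsplit]
  calc (2:ℝ)^x * Real.Gamma (1 + x)^2 * (Real.Gamma (x + 1/2) * Real.Gamma (x + 1/2) ^ (1/(2*x-1)))
      = ((2:ℝ)^x * Real.Gamma (1 + x)^2 * Real.Gamma (x + 1/2)) * Real.Gamma (x + 1/2) ^ (1/(2*x-1)) := by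
        ring
    _ ≤ ((2:ℝ)^x * Real.Gamma (1 + x)^2 * Real.Gamma (x + 1/2)) *
        (Real.Gamma (1 + x/2) / Real.Gamma (x/2 + 1/2)) := by
        apply mul_le_mul_of_nonneg_left hred
        positivity
    _ = Real.Gamma (1 + 2*x) * Real.Gamma (1 + x/2)^2 := by
        rw [← mul_div_assoc, div_eq_iff p3.ne']
        linear_combination -hId
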